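/- Let B be a category, F, G : B ⥤ Cat functors, α : F ⟶ G a natural transformation, and ∫α : ∫F ⥤ ∫G the induced functor on Grothendieck constructions. Then the following are equivalent: (1) there exist a functor L : ∫G ⥤ ∫F and an adjunction L ⊣ ∫α such that the projection ∫G ⥤ B sends every component of the unit of this adjunction to an isomorphism of B; (2) for every object b of B the functor α_b : F(b) ⥤ G(b) admits a left adjoint λ_b, and for every morphism f : b → b' of B the mate λ_{b'} ∘ G.map f ⟶ F.map f ∘ λ_b of the naturality square (G.map f) ∘ α_b = α_{b'} ∘ (F.map f), formed using chosen adjunctions λ_b ⊣ α_b and λ_{b'} ⊣ α_{b'}, is a natural isomorphism. (Condition (2) is independent of the choice of adjunctions, left adjoints being unique up to canonical isomorphism.) -/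

import Mathlib

open CategoryTheory Functor

universe v u v₁ u₁

variable {B : Type u₁} [Category.{v₁} B]

namespace GrothMateAux

open Adjunction Grothendieck


variable {F G : B ⥤ Cat.{v, u}} (α : F ⟶ G)

/-- a reducible copy of `Grothendieck.map α` -/
@[simps!]
abbrev gm : Grothendieck F ⥤ Grothendieck G where
  obj X := ⟨X.base, (α.app X.base).toFunctor.obj X.fiber⟩
  map {X Y} f := ⟨f.base, (eqToHom (α.naturality f.base).symm).toNatTrans.app X.fiber ≫
    (α.app Y.base).toFunctor.map f.fiber⟩
  map_id X := (Grothendieck.map α).map_id X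
  map_comp f g := (Grothendieck.map α).map_comp f g

section Mpr

variable (l : ∀ b : B, ↑(G.obj b) ⥤ ↑(F.obj b)) (adjs : ∀ b : B, l b ⊣ (α.app b).toFunctor)

/-- the mate -/
def μ {b b' : B} (f : b ⟶ b') : ((G.map f).toFunctor ⋙ l b' : ↑(G.obj b) ⥤ ↑(F.obj b')) ⟶ l b ⋙ (F.map f).toFunctor :=
  (mateEquiv (adjs b) (adjs b')).symm (eqToHom (congrArg Cat.Hom.toFunctor (α.naturality f).symm))

lemma keyA {b b' : B} (f : b ⟶ b') (x : ↑(G.obj b)) :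
    (G.map f).toFunctor.map ((adjs b).unit.app x) ≫
        eqToHom (Functor.congr_obj ((congrArg Cat.Hom.toFunctor (α.naturality f)).symm :
          (α.app b ≫ G.map f).toFunctor = (F.map f ≫ α.app b').toFunctor) ((l b).obj x)) =
      (adjs b').unit.app ((G.map f).toFunctor.obj x) ≫ (α.app b').toFunctor.map ((μ α l adjs f).app x) := by
  have h := unit_mateEquiv_symm (adjs b) (adjs b') (eqToHom (congrArg Cat.Hom.toFunctor (α.naturality f).symm)) x
  rw [eqToHom_app] at h
  exact h

/-- transpose of `μ.app x ≫ h` -/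
lemma transpose_eq {b b' : B} (f : b ⟶ b') (x : ↑(G.obj b)) {y : ↑(F.obj b')}
    (h : (F.map f).toFunctor.obj ((l b).obj x) ⟶ y) :
    (adjs b').homEquiv _ _ ((μ α l adjs f).app x ≫ h) =
      (G.map f).toFunctor.map ((adjs b).unit.app x) ≫
        eqToHom (Functor.congr_obj ((congrArg Cat.Hom.toFunctor (α.naturality f)).symm :
          (α.app b ≫ G.map f).toFunctor = (F.map f ≫ α.app b').toFunctor) ((l b).obj x)) ≫
        (α.app b').toFunctor.map h := by
  rw [Adjunction.homEquiv_unit, Functor.map_comp, ← Category.assoc, ← keyA]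
  simp

lemma alphaNat {b b' : B} (v : b ⟶ b') {z z' : ↑(F.obj b)} (t : z ⟶ z') :
    (α.app b').toFunctor.map ((F.map v).toFunctor.map t) =
      eqToHom (Functor.congr_obj (congrArg Cat.Hom.toFunctor (α.naturality v)) z) ≫ (G.map v).toFunctor.map ((α.app b).toFunctor.map t) ≫
        eqToHom (Functor.congr_obj (congrArg Cat.Hom.toFunctor (α.naturality v)) z').symm :=
  Functor.congr_hom (congrArg Cat.Hom.toFunctor (α.naturality v)) t

variable (hmate : ∀ {b b' : B} (f : b ⟶ b'), IsIso (μ α l adjs f))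

/-- the hom-set equivalence for the global adjunction -/
noncomputable def eFun (X : Grothendieck G) (Y : Grothendieck F) :
    ((⟨X.base, (l X.base).obj X.fiber⟩ : Grothendieck F) ⟶ Y) ≃ (X ⟶ (gm α).obj Y) where
  toFun h := ⟨h.base, (adjs Y.base).homEquiv _ _ ((μ α l adjs h.base).app X.fiber ≫ h.fiber)⟩
  invFun ψ :=
    haveI := hmate ψ.base
    ⟨ψ.base, @CategoryTheory.inv _ _ _ _ ((μ α l adjs ψ.base).app X.fiber)
      (NatIso.isIso_app_of_isIso (μ α l adjs ψ.base) X.fiber) ≫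
      ((adjs Y.base).homEquiv _ _).symm ψ.fiber⟩
  left_inv h := by
    haveI := hmate h.base
    apply Grothendieck.ext
    · simp
    · rfl
  right_inv ψ := by
    haveI := hmate ψ.base
    apply Grothendieck.ext
    · simp
    · rfl

lemma eFun_fiber (X : Grothendieck G) (Y : Grothendieck F)
    (h : (⟨X.base, (l X.base).obj X.fiber⟩ : Grothendieck F) ⟶ Y) :
    (eFun α l adjs hmate X Y h).fiber =
      (G.map h.base).toFunctor.map ((adjs X.base).unit.app X.fiber) ≫
        eqToHom (Functor.congr_obj ((congrArg Cat.Hom.toFunctor (α.naturality h.base)).symm :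
          (α.app X.base ≫ G.map h.base).toFunctor =
            (F.map h.base ≫ α.app Y.base).toFunctor) ((l X.base).obj X.fiber)) ≫
        (α.app Y.base).toFunctor.map h.fiber :=
  transpose_eq α l adjs h.base X.fiber h.fiber

lemma he (X : Grothendieck G) (Y Y' : Grothendieck F) (g : Y ⟶ Y')
    (h : (⟨X.base, (l X.base).obj X.fiber⟩ : Grothendieck F) ⟶ Y) :
    eFun α l adjs hmate X Y' (h ≫ g) =
      eFun α l adjs hmate X Y h ≫ (gm α).map g := by
  apply Grothendieck.ext
  · rw [comp_fiber ((eFun α l adjs hmate X Y h)) ((gm α).map g),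
      eFun_fiber, eFun_fiber, comp_fiber h g]
    simp only [Grothendieck.comp_base, gm_map_base, gm_map_fiber]
    rw [(Functor.congr_hom (congrArg Cat.Hom.toFunctor (G.map_comp h.base g.base)) ((adjs X.base).unit.app X.fiber) :
      (G.map (h.base ≫ g.base)).toFunctor.map _ = _)]
    simp only [Functor.map_comp]
    rw [alphaNat α g.base h.fiber]
    simp only [gm_map_base, gm_map_fiber, Functor.map_comp,
      eqToHom_map, Category.assoc, Cat.eqToHom_app, Cat.Hom.comp_obj, Cat.Hom.comp_map,
      eqToHom_trans_assoc, eqToHom_trans, Grothendieck.comp_base]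
    erw [(G.map g.base).toFunctor.map_comp, (G.map g.base).toFunctor.map_comp,
      eqToHom_map (G.map g.base).toFunctor, eqToHom_map (α.app Y'.base).toFunctor]
    simp
    erw [eqToHom_trans_assoc, eqToHom_trans_assoc, eqToHom_trans_assoc]
    rfl
  · rfl

/-- the left adjoint -/
noncomputable def Lfun : Grothendieck G ⥤ Grothendieck F :=
  Adjunction.leftAdjointOfEquiv (eFun α l adjs hmate) (he α l adjs hmate)

/-- the adjunction -/
noncomputable def Ladj : Lfun α l adjs hmate ⊣ gm α :=
  Adjunction.adjunctionOfEquivLeft (eFun α l adjs hmate) (he α l adjs hmate)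

lemma Ladj_unit_base (X : Grothendieck G) :
    ((Ladj α l adjs hmate).unit.app X).base = 𝟙 X.base := by
  simp only [Ladj, adjunctionOfEquivLeft_unit_app]
  rfl

include l adjs hmate in
lemma mpr_result :
    ∃ (L : Grothendieck G ⥤ Grothendieck F) (adj : L ⊣ gm α),
      ∀ X : Grothendieck G, IsIso ((Grothendieck.forget G).map (adj.unit.app X)) := by
  refine ⟨Lfun α l adjs hmate, Ladj α l adjs hmate, fun X => ?_⟩
  have : (Grothendieck.forget G).map ((Ladj α l adjs hmate).unit.app X) = 𝟙 X.base :=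
    Ladj_unit_base α l adjs hmate X
  exact this ▸ (IsIso.id X.base)

end Mpr

section Mp

variable (L : Grothendieck G ⥤ Grothendieck F) (adj : L ⊣ gm α)
variable (hu : ∀ X : Grothendieck G, IsIso ((Grothendieck.forget G).map (adj.unit.app X)))

/-- base of the unit -/
def ub {b : B} (x : ↑(G.obj b)) : b ⟶ (L.obj ⟨b, x⟩).base :=
  (adj.unit.app ⟨b, x⟩).base

/-- inverse of the base of the unit -/
noncomputable def iub {b : B} (x : ↑(G.obj b)) : (L.obj ⟨b, x⟩).base ⟶ b :=
  haveI := hu ⟨b, x⟩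
  @CategoryTheory.inv _ _ _ _ ((Grothendieck.forget G).map (adj.unit.app ⟨b, x⟩)) (hu ⟨b, x⟩)

lemma ub_iub {b : B} (x : ↑(G.obj b)) : ub α L adj x ≫ iub α L adj hu x = 𝟙 b :=
  haveI := hu ⟨b, x⟩
  IsIso.hom_inv_id ((Grothendieck.forget G).map (adj.unit.app ⟨b, x⟩))

lemma iub_ub {b : B} (x : ↑(G.obj b)) :
    iub α L adj hu x ≫ ub α L adj x = 𝟙 (L.obj ⟨b, x⟩).base :=
  haveI := hu ⟨b, x⟩
  IsIso.inv_hom_id ((Grothendieck.forget G).map (adj.unit.app ⟨b, x⟩))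

/-- object part of the fiberwise left adjoint -/
noncomputable abbrev lObj {b : B} (x : ↑(G.obj b)) : ↑(F.obj b) :=
  (F.map (iub α L adj hu x)).toFunctor.obj ((L.obj ⟨b, x⟩).fiber)

lemma homEquiv_base {X : Grothendieck G} {Y : Grothendieck F} (φ : L.obj X ⟶ Y) :
    (adj.homEquiv X Y φ).base = (adj.unit.app X).base ≫ φ.base := by
  rw [Adjunction.homEquiv_unit]; rfl

lemma symm_base {b : B} {x : ↑(G.obj b)} {y : ↑(F.obj b)}
    (χ : (⟨b, x⟩ : Grothendieck G) ⟶ (gm α).obj ⟨b, y⟩) (hχ : χ.base = 𝟙 b) :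
    ((adj.homEquiv ⟨b, x⟩ ⟨b, y⟩).symm χ).base = iub α L adj hu x := by
  have h : (adj.unit.app ⟨b, x⟩).base ≫ ((adj.homEquiv ⟨b, x⟩ ⟨b, y⟩).symm χ).base = 𝟙 b := by
    rw [← homEquiv_base, Equiv.apply_symm_apply, hχ]
  calc ((adj.homEquiv ⟨b, x⟩ ⟨b, y⟩).symm χ).base
      = (iub α L adj hu x ≫ ub α L adj x) ≫ ((adj.homEquiv ⟨b, x⟩ ⟨b, y⟩).symm χ).base := by
        rw [iub_ub]; simp
    _ = iub α L adj hu x := by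
        rw [Category.assoc]
        show iub α L adj hu x ≫ (adj.unit.app ⟨b, x⟩).base ≫ _ = _
        rw [h, Category.comp_id]

lemma eq1 {b : B} {x : ↑(G.obj b)} {y : ↑(F.obj b)}
    (φ : L.obj ⟨b, x⟩ ⟶ (⟨b, y⟩ : Grothendieck F)) (hφ : φ.base = iub α L adj hu x) :
    x = (G.map ((adj.homEquiv ⟨b, x⟩ ⟨b, y⟩) φ).base).toFunctor.obj x := by
  rw [homEquiv_base, hφ]
  show x = (G.map (ub α L adj x ≫ iub α L adj hu x)).toFunctor.obj x
  rw [ub_iub]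
  simp

lemma eq2 {b : B} (x : ↑(G.obj b)) : (G.map (𝟙 b)).toFunctor.obj x = x := by simp

lemma eqId (H : B ⥤ Cat.{v, u}) (b : B) (z : ↑(H.obj b)) : (H.map (𝟙 b)).toFunctor.obj z = z := by simp

lemma mapIdHom (H : B ⥤ Cat.{v, u}) (b : B) {z z' : ↑(H.obj b)} (t : z ⟶ z') :
    (H.map (𝟙 b)).toFunctor.map t = eqToHom (eqId H b z) ≫ t ≫ eqToHom (eqId H b z').symm :=
  Functor.congr_hom (congrArg Cat.Hom.toFunctor (H.map_id b)) t

lemma eq3 {b : B} {x : ↑(G.obj b)} {y : ↑(F.obj b)}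
    (χ : (⟨b, x⟩ : Grothendieck G) ⟶ (gm α).obj ⟨b, y⟩) (hχ : χ.base = 𝟙 b) :
    lObj α L adj hu x =
      (F.map (((adj.homEquiv ⟨b, x⟩ ⟨b, y⟩).symm χ).base)).toFunctor.obj ((L.obj ⟨b, x⟩).fiber) := by
  rw [symm_base α L adj hu χ hχ]

/-- hom-set equivalence for the fiberwise adjunction -/
noncomputable def efib {b : B} (x : ↑(G.obj b)) (y : ↑(F.obj b)) :
    (lObj α L adj hu x ⟶ y) ≃ (x ⟶ (α.app b).toFunctor.obj y) where
  toFun ψ :=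
    eqToHom (eq1 α L adj hu ⟨iub α L adj hu x, ψ⟩ rfl) ≫
    (adj.homEquiv ⟨b, x⟩ ⟨b, y⟩ ⟨iub α L adj hu x, ψ⟩).fiber
  invFun ρ :=
    eqToHom (eq3 α L adj hu (⟨𝟙 b, eqToHom (eq2 x) ≫ ρ⟩ :
        (⟨b, x⟩ : Grothendieck G) ⟶ (gm α).obj ⟨b, y⟩) rfl) ≫
    ((adj.homEquiv ⟨b, x⟩ ⟨b, y⟩).symm ⟨𝟙 b, eqToHom (eq2 x) ≫ ρ⟩).fiber
  left_inv ψ := by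
    have hb : (adj.homEquiv ⟨b, x⟩ ⟨b, y⟩ ⟨iub α L adj hu x, ψ⟩).base = 𝟙 b := by
      rw [homEquiv_base]; exact ub_iub α L adj hu x
    have hχ : (⟨𝟙 b, eqToHom (eq2 x) ≫ (eqToHom (eq1 α L adj hu ⟨iub α L adj hu x, ψ⟩ rfl) ≫
          (adj.homEquiv ⟨b, x⟩ ⟨b, y⟩ ⟨iub α L adj hu x, ψ⟩).fiber)⟩ :
          (⟨b, x⟩ : Grothendieck G) ⟶ (gm α).obj ⟨b, y⟩) =
        adj.homEquiv ⟨b, x⟩ ⟨b, y⟩ ⟨iub α L adj hu x, ψ⟩ := by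
      apply Grothendieck.ext
      · simp
      · exact hb.symm
    dsimp only
    rw [Grothendieck.congr (congrArg (adj.homEquiv ⟨b, x⟩ ⟨b, y⟩).symm hχ),
      Grothendieck.congr (Equiv.symm_apply_apply (adj.homEquiv ⟨b, x⟩ ⟨b, y⟩)
        ⟨iub α L adj hu x, ψ⟩)]
    simp
  right_inv ρ := by
    have hφ : (⟨iub α L adj hu x, eqToHom (eq3 α L adj hu (⟨𝟙 b, eqToHom (eq2 x) ≫ ρ⟩ :
          (⟨b, x⟩ : Grothendieck G) ⟶ (gm α).obj ⟨b, y⟩) rfl) ≫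
          ((adj.homEquiv ⟨b, x⟩ ⟨b, y⟩).symm ⟨𝟙 b, eqToHom (eq2 x) ≫ ρ⟩).fiber⟩ :
          L.obj ⟨b, x⟩ ⟶ (⟨b, y⟩ : Grothendieck F)) =
        (adj.homEquiv ⟨b, x⟩ ⟨b, y⟩).symm ⟨𝟙 b, eqToHom (eq2 x) ≫ ρ⟩ := by
      apply Grothendieck.ext
      · simp
      · exact (symm_base α L adj hu _ rfl).symm
    dsimp only
    rw [Grothendieck.congr (congrArg (adj.homEquiv ⟨b, x⟩ ⟨b, y⟩) hφ),
      Grothendieck.congr (Equiv.apply_symm_apply (adj.homEquiv ⟨b, x⟩ ⟨b, y⟩)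
        ⟨𝟙 b, eqToHom (eq2 x) ≫ ρ⟩)]
    simp

lemma he' {b : B} (x : ↑(G.obj b)) (y y' : ↑(F.obj b)) (g : y ⟶ y')
    (h : lObj α L adj hu x ⟶ y) :
    efib α L adj hu x y' (h ≫ g) = efib α L adj hu x y h ≫ (α.app b).toFunctor.map g := by
  have hsplit : (⟨iub α L adj hu x, h ≫ g⟩ : L.obj ⟨b, x⟩ ⟶ (⟨b, y'⟩ : Grothendieck F)) =
      ((⟨iub α L adj hu x, h⟩ : L.obj ⟨b, x⟩ ⟶ (⟨b, y⟩ : Grothendieck F)) ≫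
        (⟨𝟙 b, eqToHom (eqId F b y) ≫ g⟩ : (⟨b, y⟩ : Grothendieck F) ⟶ ⟨b, y'⟩) :
          L.obj ⟨b, x⟩ ⟶ (⟨b, y'⟩ : Grothendieck F)) := by
    apply Grothendieck.ext
    · rw [Grothendieck.comp_fiber]
      dsimp only
      rw [mapIdHom]
      simp
      erw [eqToHom_trans_assoc]
    · simp
  dsimp only [efib, Equiv.coe_fn_mk]
  rw [Grothendieck.congr (congrArg (adj.homEquiv ⟨b, x⟩ ⟨b, y'⟩) hsplit),
    Grothendieck.congr (Adjunction.homEquiv_naturality_right adj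
      (⟨iub α L adj hu x, h⟩ : L.obj ⟨b, x⟩ ⟶ (⟨b, y⟩ : Grothendieck F))
      (⟨𝟙 b, eqToHom (eqId F b y) ≫ g⟩ : (⟨b, y⟩ : Grothendieck F) ⟶ ⟨b, y'⟩)),
    Grothendieck.comp_fiber]
  simp only [gm_map_base, gm_map_fiber, mapIdHom,
    Cat.eqToHom_app, eqToHom_map, eqToHom_trans, eqToHom_trans_assoc, Category.assoc,
    Functor.map_comp]
  simp

/-- the fiberwise left adjoint -/
noncomputable def lfib (b : B) : ↑(G.obj b) ⥤ ↑(F.obj b) :=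
  Adjunction.leftAdjointOfEquiv (fun x y => efib α L adj hu x y) (he' α L adj hu)

/-- the fiberwise adjunction -/
noncomputable def adjfib (b : B) : lfib α L adj hu b ⊣ (α.app b).toFunctor :=
  Adjunction.adjunctionOfEquivLeft _ _

lemma adjfib_unit {b : B} (x : ↑(G.obj b)) :
    (adjfib α L adj hu b).unit.app x =
      efib α L adj hu x (lObj α L adj hu x) (𝟙 (lObj α L adj hu x)) := by
  simp only [adjfib, adjunctionOfEquivLeft_unit_app]
  rfl

/-- If all transposes of `m ≫ ·` are bijective, `m` is iso. -/
lemma isIso_of_transpose_bijective {C : Type*} {D : Type*} [Category C] [Category D]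
    {L' : C ⥤ D} {R' : D ⥤ C} (adj' : L' ⊣ R') {a : C} {c : D} (m : L'.obj a ⟶ c)
    (hbij : ∀ y : D, Function.Bijective (fun h : c ⟶ y => adj'.homEquiv a y (m ≫ h))) :
    IsIso m := by
  have hb : ∀ y : D, Function.Bijective (fun h : c ⟶ y => m ≫ h) := by
    intro y
    have heq : (fun h : c ⟶ y => m ≫ h) =
        (adj'.homEquiv a y).symm ∘ (fun h : c ⟶ y => adj'.homEquiv a y (m ≫ h)) := by
      funext h; simp
    rw [heq]
    exact (adj'.homEquiv a y).symm.bijective.comp (hbij y)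
  obtain ⟨n, hn⟩ := (hb (L'.obj a)).2 (𝟙 _)
  have hn' : m ≫ n = 𝟙 (L'.obj a) := hn
  refine ⟨⟨n, hn', (hb c).1 ?_⟩⟩
  show m ≫ n ≫ m = m ≫ 𝟙 c
  rw [← Category.assoc, hn', Category.id_comp, Category.comp_id]

section Mate

variable {b b' : B} (f : b ⟶ b') (x : ↑(G.obj b))

lemma baseT {y : ↑(F.obj b')} (h : (F.map f).toFunctor.obj (lObj α L adj hu x) ⟶ y) :
    (adj.homEquiv ⟨b, x⟩ ⟨b', y⟩
      ((⟨iub α L adj hu x, 𝟙 (lObj α L adj hu x)⟩ :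
          L.obj ⟨b, x⟩ ⟶ (⟨b, lObj α L adj hu x⟩ : Grothendieck F)) ≫
        (⟨f, h⟩ : (⟨b, lObj α L adj hu x⟩ : Grothendieck F) ⟶ ⟨b', y⟩))).base = f := by
  rw [homEquiv_base]
  show ub α L adj x ≫ iub α L adj hu x ≫ f = f
  rw [← Category.assoc, ub_iub, Category.id_comp]

lemma symm_baseT {y : ↑(F.obj b')} (ρ : (G.map f).toFunctor.obj x ⟶ (α.app b').toFunctor.obj y) :
    ((adj.homEquiv ⟨b, x⟩ ⟨b', y⟩).symm
        (⟨f, ρ⟩ : (⟨b, x⟩ : Grothendieck G) ⟶ (gm α).obj ⟨b', y⟩)).base =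
      iub α L adj hu x ≫ f := by
  have h : (adj.unit.app ⟨b, x⟩).base ≫
      ((adj.homEquiv ⟨b, x⟩ ⟨b', y⟩).symm
        (⟨f, ρ⟩ : (⟨b, x⟩ : Grothendieck G) ⟶ (gm α).obj ⟨b', y⟩)).base = f := by
    rw [← homEquiv_base, Equiv.apply_symm_apply]
  have h' : ub α L adj x ≫
      ((adj.homEquiv ⟨b, x⟩ ⟨b', y⟩).symm
        (⟨f, ρ⟩ : (⟨b, x⟩ : Grothendieck G) ⟶ (gm α).obj ⟨b', y⟩)).base = f := h
  have h2 : iub α L adj hu x ≫ ub α L adj x ≫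
      ((adj.homEquiv ⟨b, x⟩ ⟨b', y⟩).symm
        (⟨f, ρ⟩ : (⟨b, x⟩ : Grothendieck G) ⟶ (gm α).obj ⟨b', y⟩)).base =
      iub α L adj hu x ≫ f := by rw [h']
  rwa [← Category.assoc, iub_ub, Category.id_comp] at h2

/-- global transpose map -/
noncomputable def Tg (y : ↑(F.obj b')) (h : (F.map f).toFunctor.obj (lObj α L adj hu x) ⟶ y) :
    (G.map f).toFunctor.obj x ⟶ (α.app b').toFunctor.obj y :=
  eqToHom (by rw [baseT α L adj hu f x h]) ≫
    (adj.homEquiv ⟨b, x⟩ ⟨b', y⟩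
      ((⟨iub α L adj hu x, 𝟙 (lObj α L adj hu x)⟩ :
          L.obj ⟨b, x⟩ ⟶ (⟨b, lObj α L adj hu x⟩ : Grothendieck F)) ≫
        (⟨f, h⟩ : (⟨b, lObj α L adj hu x⟩ : Grothendieck F) ⟶ ⟨b', y⟩))).fiber

/-- global transpose inverse -/
noncomputable def Sg (y : ↑(F.obj b')) (ρ : (G.map f).toFunctor.obj x ⟶ (α.app b').toFunctor.obj y) :
    (F.map f).toFunctor.obj (lObj α L adj hu x) ⟶ y :=
  eqToHom (by
    rw [symm_baseT α L adj hu f x ρ]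
    exact (Functor.congr_obj (congrArg Cat.Hom.toFunctor (F.map_comp (iub α L adj hu x) f)) ((L.obj ⟨b, x⟩).fiber)).symm) ≫
  ((adj.homEquiv ⟨b, x⟩ ⟨b', y⟩).symm
    (⟨f, ρ⟩ : (⟨b, x⟩ : Grothendieck G) ⟶ (gm α).obj ⟨b', y⟩)).fiber

lemma Tg_Sg (y : ↑(F.obj b')) (ρ : (G.map f).toFunctor.obj x ⟶ (α.app b').toFunctor.obj y) :
    Tg α L adj hu f x y (Sg α L adj hu f x y ρ) = ρ := by
  have hcomp : ((⟨iub α L adj hu x, 𝟙 (lObj α L adj hu x)⟩ :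
          L.obj ⟨b, x⟩ ⟶ (⟨b, lObj α L adj hu x⟩ : Grothendieck F)) ≫
        (⟨f, Sg α L adj hu f x y ρ⟩ :
          (⟨b, lObj α L adj hu x⟩ : Grothendieck F) ⟶ ⟨b', y⟩) :
          L.obj ⟨b, x⟩ ⟶ (⟨b', y⟩ : Grothendieck F)) =
      (adj.homEquiv ⟨b, x⟩ ⟨b', y⟩).symm
        (⟨f, ρ⟩ : (⟨b, x⟩ : Grothendieck G) ⟶ (gm α).obj ⟨b', y⟩) := by
    apply Grothendieck.ext
    · rw [Grothendieck.comp_fiber]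
      dsimp
      simp [Sg, lObj]
      erw [eqToHom_trans_assoc, eqToHom_trans_assoc, eqToHom_refl, Category.id_comp]
    · exact (symm_baseT α L adj hu f x ρ).symm
  dsimp only [Tg]
  rw [Grothendieck.congr (congrArg (adj.homEquiv ⟨b, x⟩ ⟨b', y⟩) hcomp),
    Grothendieck.congr (Equiv.apply_symm_apply (adj.homEquiv ⟨b, x⟩ ⟨b', y⟩)
      (⟨f, ρ⟩ : (⟨b, x⟩ : Grothendieck G) ⟶ (gm α).obj ⟨b', y⟩))]
  simp

lemma Sg_Tg (y : ↑(F.obj b')) (h : (F.map f).toFunctor.obj (lObj α L adj hu x) ⟶ y) :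
    Sg α L adj hu f x y (Tg α L adj hu f x y h) = h := by
  have hχ : (⟨f, Tg α L adj hu f x y h⟩ :
        (⟨b, x⟩ : Grothendieck G) ⟶ (gm α).obj ⟨b', y⟩) =
      adj.homEquiv ⟨b, x⟩ ⟨b', y⟩
        ((⟨iub α L adj hu x, 𝟙 (lObj α L adj hu x)⟩ :
            L.obj ⟨b, x⟩ ⟶ (⟨b, lObj α L adj hu x⟩ : Grothendieck F)) ≫
          (⟨f, h⟩ : (⟨b, lObj α L adj hu x⟩ : Grothendieck F) ⟶ ⟨b', y⟩)) := by
    apply Grothendieck.ext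
    · simp [Tg]
    · exact (baseT α L adj hu f x h).symm
  dsimp only [Sg]
  rw [Grothendieck.congr (congrArg (adj.homEquiv ⟨b, x⟩ ⟨b', y⟩).symm hχ),
    Grothendieck.congr (Equiv.symm_apply_apply (adj.homEquiv ⟨b, x⟩ ⟨b', y⟩)
      ((⟨iub α L adj hu x, 𝟙 (lObj α L adj hu x)⟩ :
          L.obj ⟨b, x⟩ ⟶ (⟨b, lObj α L adj hu x⟩ : Grothendieck F)) ≫
        (⟨f, h⟩ : (⟨b, lObj α L adj hu x⟩ : Grothendieck F) ⟶ ⟨b', y⟩))),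
    Grothendieck.comp_fiber]
  dsimp
  simp [lObj]
  erw [eqToHom_trans_assoc, eqToHom_trans_assoc, eqToHom_refl, Category.id_comp]

lemma T_eq_Tg (y : ↑(F.obj b')) (h : (F.map f).toFunctor.obj (lObj α L adj hu x) ⟶ y) :
    (adjfib α L adj hu b').homEquiv _ _
        ((μ α (lfib α L adj hu) (adjfib α L adj hu) f).app x ≫ h) =
      Tg α L adj hu f x y h := by
  erw [transpose_eq]
  rw [adjfib_unit]
  dsimp only [efib, Equiv.coe_fn_mk, Tg]
  rw [Grothendieck.congr (Adjunction.homEquiv_naturality_right adj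
      (⟨iub α L adj hu x, 𝟙 (lObj α L adj hu x)⟩ :
        L.obj ⟨b, x⟩ ⟶ (⟨b, lObj α L adj hu x⟩ : Grothendieck F))
      (⟨f, h⟩ : (⟨b, lObj α L adj hu x⟩ : Grothendieck F) ⟶ ⟨b', y⟩)),
    Grothendieck.comp_fiber]
  simp only [gm_map_base, gm_map_fiber, Cat.eqToHom_app,
    eqToHom_map, Functor.map_comp, eqToHom_trans, eqToHom_trans_assoc, Category.assoc]
  erw [(G.map f).toFunctor.map_comp, eqToHom_map (G.map f).toFunctor]
  simp
  rfl

lemma mate_iso : IsIso (μ α (lfib α L adj hu) (adjfib α L adj hu) f) := by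
  have hc : ∀ x : ↑(G.obj b),
      IsIso ((μ α (lfib α L adj hu) (adjfib α L adj hu) f).app x) := by
    intro x
    apply isIso_of_transpose_bijective (adjfib α L adj hu b')
    intro y
    refine Function.bijective_iff_has_inverse.2
      ⟨Sg α L adj hu f x y, fun h => ?_, fun ρ => ?_⟩
    · show Sg α L adj hu f x y ((adjfib α L adj hu b').homEquiv _ _
        ((μ α (lfib α L adj hu) (adjfib α L adj hu) f).app x ≫ h)) = h
      rw [T_eq_Tg α L adj hu f x y h]
      exact Sg_Tg α L adj hu f x y h
    · show (adjfib α L adj hu b').homEquiv _ _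
        ((μ α (lfib α L adj hu) (adjfib α L adj hu) f).app x ≫ Sg α L adj hu f x y ρ) = ρ
      rw [T_eq_Tg α L adj hu f x y (Sg α L adj hu f x y ρ)]
      exact Tg_Sg α L adj hu f x y ρ
  exact NatIso.isIso_of_isIso_app _

end Mate

end Mp

end GrothMateAux

/-- For a natural transformation `α : F ⟶ G` of functors `F G : B ⥤ Cat`, the induced functor
`∫α : ∫F ⥤ ∫G` on Grothendieck constructions admits a left adjoint whose adjunction unit has
all of its components sent to isomorphisms by the projection `∫G ⥤ B` if and only if every
component `α.app b : F(b) ⥤ G(b)` admits a left adjoint `l b` and, for every morphism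
`f : b ⟶ b'` of `B`, the mate `l b' ∘ G.map f ⟶ F.map f ∘ l b` of the naturality square
`G.map f ∘ α.app b = α.app b' ∘ F.map f` (formed using chosen adjunctions `l b ⊣ α.app b` and
`l b' ⊣ α.app b'`) is a natural isomorphism. -/
theorem grothendieck_map_right_adjoint_iff_fiberwise_and_mates
    (F G : B ⥤ Cat.{v, u}) (α : F ⟶ G) :
    (∃ (L : Grothendieck G ⥤ Grothendieck F) (adj : L ⊣ Grothendieck.map α),
        ∀ X : Grothendieck G, IsIso ((Grothendieck.forget G).map (adj.unit.app X))) ↔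
      ∃ (l : ∀ b : B, ↑(G.obj b) ⥤ ↑(F.obj b)) (adjs : ∀ b : B, l b ⊣ (α.app b).toFunctor),
        ∀ {b b' : B} (f : b ⟶ b'),
          IsIso ((mateEquiv (adjs b) (adjs b')).symm (eqToHom (congrArg Cat.Hom.toFunctor (α.naturality f).symm)))  := by
  constructor
  · rintro ⟨L, adj, hu⟩
    exact ⟨GrothMateAux.lfib α L adj hu, GrothMateAux.adjfib α L adj hu,
      fun {b b'} f => GrothMateAux.mate_iso α L adj hu f⟩
  · rintro ⟨l, adjs, hmate⟩
    exact GrothMateAux.mpr_result α l adjs (fun {b b'} f => hmate f)
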